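/- Let F(x) = L(x^{2^i+1}) + L'(x) on F_{2^m} with L, L' linear (additive) maps and gcd(m,i)=1. Then F is a bijection if and only if for every u ∈ F_{2^m}^* and every v ∈ F_{2^m} with tr(v) = tr(1), one has L(u^{2^i+1} v) ≠ L'(u). -/

import Mathlib

namespace Stmt10Aux

/-- addition-is-subtraction helper in characteristic two. -/
lemma char_two_add_eq_zero_iff {R : Type*} [Ring R] [CharP R 2] (a b : R) :
    a + b = 0 ↔ a = b := by
  rw [← CharTwo.sub_eq_add, sub_eq_zero]

/-- The Frobenius as an algebra equivalence of `GaloisField 2 m` over `ZMod 2`. -/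
noncomputable def frobAlg (m : ℕ) : GaloisField 2 m ≃ₐ[ZMod 2] GaloisField 2 m :=
  AlgEquiv.ofRingEquiv (f := frobeniusEquiv (GaloisField 2 m) 2)
    (fun a => by rw [frobeniusEquiv_apply, frobenius_def, ← map_pow, ZMod.pow_card a])

lemma trace_sq (m : ℕ) (x : GaloisField 2 m) :
    Algebra.trace (ZMod 2) (GaloisField 2 m) (x ^ 2) =
      Algebra.trace (ZMod 2) (GaloisField 2 m) x := by
  have h := Algebra.trace_eq_of_algEquiv (frobAlg m) x
  have he : frobAlg m x = x ^ 2 := frobeniusEquiv_apply (GaloisField 2 m) 2 x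
  rw [he] at h; exact h

lemma trace_pow_pow (m j : ℕ) (x : GaloisField 2 m) :
    Algebra.trace (ZMod 2) (GaloisField 2 m) (x ^ 2 ^ j) =
      Algebra.trace (ZMod 2) (GaloisField 2 m) x := by
  induction j with
  | zero => simp
  | succ j ih => rw [pow_succ, pow_mul, trace_sq, ih]

lemma fixed (m i : ℕ) (hm : 0 < m) (hi : Nat.gcd m i = 1) (x : GaloisField 2 m)
    (hx : x ^ 2 ^ i = x) : x = 0 ∨ x = 1 := by
  have : Fintype (GaloisField 2 m) := Fintype.ofFinite _
  have hm' : x ^ 2 ^ m = x := by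
    have h2 := FiniteField.pow_card x
    have hc : Fintype.card (GaloisField 2 m) = 2 ^ m := by
      rw [← Nat.card_eq_fintype_card, GaloisField.card 2 m hm.ne']
    rwa [hc] at h2
  have iter : ∀ (j : ℕ), x ^ 2 ^ j = x → ∀ a : ℕ, x ^ 2 ^ (j * a) = x := by
    intro j hj a
    induction a with
    | zero => simp
    | succ a ih => rw [Nat.mul_succ, pow_add, pow_mul, ih, hj]
  have hsq : x ^ 2 = x := by
    rcases eq_or_lt_of_le (Nat.succ_le_of_lt hm) with h1 | h1
    · have h1' : m = 1 := h1.symm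
      subst h1'
      simpa using hm'
    · have hco : Nat.Coprime i m := (Nat.Coprime.symm hi)
      obtain ⟨a, -, ha⟩ := Nat.exists_mul_mod_eq_one_of_coprime hco h1
      have hdm := Nat.div_add_mod (i * a) m
      have hab : i * a = m * (i * a / m) + 1 := by omega
      have e1 : x ^ 2 ^ (m * (i * a / m)) = x := iter m hm' _
      have e2 : x ^ 2 ^ (i * a) = x := iter i hx a
      rw [hab, pow_succ, pow_mul, e1] at e2
      exact e2
  have hx0 : x * (x - 1) = 0 := by linear_combination hsq
  rcases mul_eq_zero.mp hx0 with h | h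
  · exact Or.inl h
  · exact Or.inr (sub_eq_zero.mp h)

lemma exists_root (m i : ℕ) (hm : 0 < m) (hi : Nat.gcd m i = 1) (w : GaloisField 2 m)
    (hw : Algebra.trace (ZMod 2) (GaloisField 2 m) w = 0) :
    ∃ t : GaloisField 2 m, t ^ 2 ^ i + t = w := by
  classical
  let f0 : GaloisField 2 m →+ GaloisField 2 m :=
    { toFun := fun x => x ^ 2 ^ i + x
      map_zero' := by simp
      map_add' := fun a b => by
        show (a + b) ^ 2 ^ i + (a + b) = (a ^ 2 ^ i + a) + (b ^ 2 ^ i + b)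
        rw [add_pow_char_pow a b 2 i]; ring }
  let f : GaloisField 2 m →ₗ[ZMod 2] GaloisField 2 m := f0.toZModLinearMap 2
  have hf : ∀ x : GaloisField 2 m, f x = x ^ 2 ^ i + x := fun x => rfl
  have hker : LinearMap.ker f = Submodule.span (ZMod 2) {(1 : GaloisField 2 m)} := by
    ext x
    rw [LinearMap.mem_ker, Submodule.mem_span_singleton, hf]
    constructor
    · intro hx
      have hx0 : x ^ 2 ^ i = x := (char_two_add_eq_zero_iff _ _).mp hx
      rcases fixed m i hm hi x hx0 with h | h
      · exact ⟨0, by simp [h]⟩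
      · exact ⟨1, by simp [h]⟩
    · rintro ⟨c, rfl⟩
      have hc : c = 0 ∨ c = 1 := by revert c; decide
      rcases hc with rfl | rfl
      · simp
      · simp only [one_smul, one_pow]
        exact CharTwo.add_self_eq_zero _
  have hfr : Module.finrank (ZMod 2) (GaloisField 2 m) = m := GaloisField.finrank 2 hm.ne'
  have hker1 : Module.finrank (ZMod 2) (LinearMap.ker f) = 1 := by
    rw [hker]; exact finrank_span_singleton one_ne_zero
  have hrange : Module.finrank (ZMod 2) (LinearMap.range f) = m - 1 := by
    have h := LinearMap.finrank_range_add_finrank_ker f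
    rw [hker1, hfr] at h; omega
  set T := Algebra.trace (ZMod 2) (GaloisField 2 m) with hT
  have hTne : ∃ c : GaloisField 2 m, T c ≠ 0 := by
    by_contra hc
    push_neg at hc
    have hnd := (traceForm_nondegenerate (ZMod 2) (GaloisField 2 m)).1 (1 : GaloisField 2 m) (fun b => by
      rw [Algebra.traceForm_apply, one_mul]; exact hc b)
    exact one_ne_zero hnd
  have h01 : ∀ y : ZMod 2, y = 0 ∨ y = 1 := by decide
  have hTrange : LinearMap.range T = ⊤ := by
    obtain ⟨c, hc⟩ := hTne
    have hc1 : T c = 1 := (h01 (T c)).resolve_left hc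
    rw [Submodule.eq_top_iff']
    intro y
    rcases h01 y with rfl | rfl
    · exact ⟨0, map_zero T⟩
    · exact ⟨c, hc1⟩
  have hTker : Module.finrank (ZMod 2) (LinearMap.ker T) = m - 1 := by
    have h := LinearMap.finrank_range_add_finrank_ker T
    rw [hTrange, finrank_top, Module.finrank_self, hfr] at h
    omega
  have hle : LinearMap.range f ≤ LinearMap.ker T := by
    rintro y ⟨x, rfl⟩
    rw [LinearMap.mem_ker, hf, map_add, hT, trace_pow_pow]
    exact CharTwo.add_self_eq_zero _
  have heq : LinearMap.range f = LinearMap.ker T :=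
    Submodule.eq_of_le_of_finrank_le hle (by rw [hrange, hTker])
  have hwmem : w ∈ LinearMap.range f := heq ▸ (LinearMap.mem_ker.mpr hw)
  obtain ⟨t, ht⟩ := hwmem
  exact ⟨t, by rw [← hf t, ht]⟩

end Stmt10Aux

/-- `F(x) = L(x^{2^i+1}) + L'(x)` with `L, L'` linear and `gcd(m,i) = 1` is a
bijection of `𝔽_{2^m}` iff for every `u ≠ 0` and every `v` with
`tr(v) = tr(1)` one has `L(u^{2^i+1} v) ≠ L'(u)`. -/
theorem stmt_10 (m i : ℕ) (hm : 0 < m) (hi : Nat.gcd m i = 1)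
    (L L' : GaloisField 2 m →ₗ[ZMod 2] GaloisField 2 m) :
    Function.Bijective (fun x : GaloisField 2 m => L (x ^ (2 ^ i + 1)) + L' x) ↔
    ∀ u : GaloisField 2 m, u ≠ 0 → ∀ v : GaloisField 2 m,
      Algebra.trace (ZMod 2) (GaloisField 2 m) v =
        Algebra.trace (ZMod 2) (GaloisField 2 m) 1 →
      L (u ^ (2 ^ i + 1) * v) ≠ L' u := by
  classical
  have h2K : (2 : GaloisField 2 m) = 0 := CharTwo.two_eq_zero
  set T := Algebra.trace (ZMod 2) (GaloisField 2 m) with hT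
  set F : GaloisField 2 m → GaloisField 2 m :=
    fun x => L (x ^ (2 ^ i + 1)) + L' x with hF
  have key : ∀ u t : GaloisField 2 m,
      F (u * t) + F (u * t + u) =
        L (u ^ (2 ^ i + 1) * (t ^ 2 ^ i + t + 1)) + L' u := by
    intro u t
    have hA : (u * t) ^ (2 ^ i + 1) + (u * t + u) ^ (2 ^ i + 1)
        = u ^ (2 ^ i + 1) * (t ^ 2 ^ i + t + 1) := by
      rw [pow_succ, pow_succ, pow_succ, add_pow_char_pow (u * t) u 2 i, mul_pow]
      have hU : ∃ U : GaloisField 2 m, u ^ 2 ^ i = U := ⟨_, rfl⟩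
      obtain ⟨U, hU⟩ := hU
      have hX : ∃ X : GaloisField 2 m, t ^ 2 ^ i = X := ⟨_, rfl⟩
      obtain ⟨X, hX⟩ := hX
      rw [hU, hX]
      linear_combination (U * X * u * t) * h2K
    have hB : u * t + (u * t + u) = u := by
      linear_combination (u * t) * h2K
    have : F (u * t) + F (u * t + u)
        = L ((u * t) ^ (2 ^ i + 1) + (u * t + u) ^ (2 ^ i + 1))
          + L' (u * t + (u * t + u)) := by
      rw [hF, map_add, map_add]
      ring
    rw [this, hA, hB]
  rw [← Finite.injective_iff_bijective]
  constructor
  · intro hinj u hu v hv hLv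
    have hw : T (v + 1) = 0 := by
      rw [map_add, hv]
      exact CharTwo.add_self_eq_zero _
    obtain ⟨t, ht⟩ := Stmt10Aux.exists_root m i hm hi (v + 1) hw
    have hv' : t ^ 2 ^ i + t + 1 = v := by
      rw [ht]
      linear_combination h2K
    have hzero : F (u * t) + F (u * t + u) = 0 := by
      rw [key u t, hv', hLv]
      exact CharTwo.add_self_eq_zero _
    have heq : F (u * t) = F (u * t + u) :=
      (Stmt10Aux.char_two_add_eq_zero_iff _ _).mp hzero
    have h0 := hinj heq
    rw [left_eq_add] at h0
    exact hu h0
  · intro h x y hxy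
    by_contra hne
    set u := x + y with hu
    have hu0 : u ≠ 0 := by
      intro h0
      exact hne ((Stmt10Aux.char_two_add_eq_zero_iff x y).mp (by rw [← hu, h0]))
    set t := x * u⁻¹ with htdef
    have hx : u * t = x := by
      rw [htdef, mul_comm, mul_assoc, inv_mul_cancel₀ hu0, mul_one]
    have hy : u * t + u = y := by
      rw [hx, hu]
      linear_combination x * h2K
    have hzero : F (u * t) + F (u * t + u) = 0 := by
      rw [hy, hx, hxy]
      exact CharTwo.add_self_eq_zero _
    set v := t ^ 2 ^ i + t + 1 with hv
    have hLv : L (u ^ (2 ^ i + 1) * v) = L' u :=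
      (Stmt10Aux.char_two_add_eq_zero_iff _ _).mp (by rw [← key u t, hzero])
    have htr : T v = T 1 := by
      rw [hv, map_add, map_add, hT, Stmt10Aux.trace_pow_pow]
      have : Algebra.trace (ZMod 2) (GaloisField 2 m) t
          + Algebra.trace (ZMod 2) (GaloisField 2 m) t = 0 :=
        CharTwo.add_self_eq_zero _
      rw [this, zero_add]
    exact h u hu0 v htr hLv
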